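/- Let G be a finite non-solvable group and x ∈ G such that the subgroup generated by nil_G(x) is a maximal subgroup of G. Then the cardinality of nil_G(x) is not equal to p and not equal to p² for any prime p. -/

import Mathlib

/-- The nilpotentizer of `x` in `G`: the set of `y` such that `⟨x, y⟩` is nilpotent. -/
def nilpotentizer {G : Type*} [Group G] (x : G) : Set G :=
  {y | Group.IsNilpotent (Subgroup.closure ({x, y} : Set G))}

open Subgroup

section Aux

variable {G : Type*} [Group G]

/-- If `x` and `y` commute, then the subgroup they generate is nilpotent. -/
lemma nil_closure_pair_of_commute {x y : G} (h : x * y = y * x) :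
    Group.IsNilpotent (Subgroup.closure ({x, y} : Set G)) := by
  letI : CommGroup (Subgroup.closure ({x, y} : Set G)) :=
    Subgroup.closureCommGroupOfComm (k := {x, y}) (by
      rintro a (rfl | rfl) b (rfl | rfl)
      · rfl
      · exact h
      · exact h.symm
      · rfl)
  infer_instance

/-- Nilpotency of subgroups descends along inclusions. -/
lemma nilpotent_of_le {H K : Subgroup G} (hle : H ≤ K) (hK : Group.IsNilpotent K) :
    Group.IsNilpotent H := by
  haveI := hK
  exact nilpotent_of_mulEquiv (Subgroup.subgroupOfEquivOfLe hle)

lemma mem_nilpotentizer_of_mem_closure {x y z : G} (hy : y ∈ nilpotentizer x)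
    (hz : z ∈ Subgroup.closure ({x, y} : Set G)) : z ∈ nilpotentizer x := by
  have hle : Subgroup.closure ({x, z} : Set G) ≤ Subgroup.closure ({x, y} : Set G) := by
    rw [Subgroup.closure_le]
    rintro a (rfl | rfl)
    · exact Subgroup.subset_closure (Set.mem_insert _ _)
    · exact hz
  exact nilpotent_of_le hle hy

lemma self_mem_nilpotentizer (x : G) : x ∈ nilpotentizer x :=
  nil_closure_pair_of_commute rfl

lemma zpowers_subset_nilpotentizer (x : G) :
    ((Subgroup.zpowers x : Subgroup G) : Set G) ⊆ nilpotentizer x := by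
  intro y hy
  exact mem_nilpotentizer_of_mem_closure (self_mem_nilpotentizer x)
    (Subgroup.zpowers_le.mpr (Subgroup.subset_closure (Set.mem_insert _ _)) hy)

end Aux

section Aux2

variable {G : Type*} [Group G]

/-- The nilpotentizer is a union of left cosets of `⟨x⟩`, so `orderOf x` divides its size. -/
lemma orderOf_dvd_card_nilpotentizer [Finite G] (x : G) :
    orderOf x ∣ Nat.card (nilpotentizer x) := by
  classical
  set H : Subgroup G := Subgroup.zpowers x with hH
  set T : Set (G ⧸ H) := QuotientGroup.mk '' (nilpotentizer x) with hT
  have key : nilpotentizer x = QuotientGroup.mk ⁻¹' T := by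
    apply Set.Subset.antisymm
    · intro y hy
      exact Set.mem_preimage.mpr ⟨y, hy, rfl⟩
    · rintro z hz
      obtain ⟨y, hy, hyz⟩ := hz
      have hmem : y⁻¹ * z ∈ H := QuotientGroup.eq.mp hyz
      have hz' : z ∈ Subgroup.closure ({x, y} : Set G) := by
        have h1 : y ∈ Subgroup.closure ({x, y} : Set G) :=
          Subgroup.subset_closure (Set.mem_insert_of_mem _ rfl)
        have h2 : y⁻¹ * z ∈ Subgroup.closure ({x, y} : Set G) :=
          Subgroup.zpowers_le.mpr (Subgroup.subset_closure (Set.mem_insert _ _)) hmem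
        have := mul_mem h1 h2
        rwa [mul_inv_cancel_left] at this
      exact mem_nilpotentizer_of_mem_closure hy hz'
  have hcard : Nat.card (nilpotentizer x) = Nat.card H * Nat.card T := by
    rw [key, Nat.card_congr (QuotientGroup.preimageMkEquivSubgroupProdSet H T), Nat.card_prod]
  rw [hcard, ← Nat.card_zpowers]
  exact Dvd.intro _ rfl

/-- Any `p`-subgroup containing `x` is contained in the nilpotentizer of `x`. -/
lemma pgroup_subset_nilpotentizer [Finite G] {p : ℕ} [Fact p.Prime] {x : G} {P : Subgroup G}
    (hP : IsPGroup p P) (hx : x ∈ P) : (P : Set G) ⊆ nilpotentizer x := by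
  intro y hy
  have hle : Subgroup.closure ({x, y} : Set G) ≤ P := by
    rw [Subgroup.closure_le]
    rintro a (rfl | rfl) <;> assumption
  exact (hP.to_le hle).isNilpotent

end Aux2

section Aux3

variable {G : Type*} [Group G]

/-- If `M` normalizes `Q`, then `|Q ⊔ M| ≤ |Q| * |M|`. -/
lemma card_sup_le_of_le_normalizer [Finite G] {Q M : Subgroup G} (h : M ≤ Subgroup.normalizer (Q : Set G)) :
    Nat.card (Q ⊔ M : Subgroup G) ≤ Nat.card Q * Nat.card M := by
  classical
  set R : Subgroup G := Q ⊔ M with hR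
  have hQR : Q ≤ R := le_sup_left
  have hMR : M ≤ R := le_sup_right
  have hRn : R ≤ Subgroup.normalizer (Q : Set G) := sup_le Subgroup.le_normalizer h
  set N' : Subgroup R := Q.subgroupOf R with hN'
  haveI hN'norm : N'.Normal := by
    constructor
    intro n hn r
    have hr : (r : G) ∈ Subgroup.normalizer (Q : Set G) := hRn r.2
    have : (r : G) * (n : G) * (r : G)⁻¹ ∈ Q := by
      rw [← Subgroup.mem_normalizer_iff.mp hr]
      exact hn
    simpa [hN', Subgroup.mem_subgroupOf] using this
  -- the inclusion of M surjects onto R ⧸ N'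
  set φ : M →* R ⧸ N' := (QuotientGroup.mk' N').comp (Subgroup.inclusion hMR) with hφ
  have hcomap : N' ⊔ ((Subgroup.inclusion hMR).range) = (⊤ : Subgroup R) := by
    apply Subgroup.map_injective R.subtype_injective
    rw [Subgroup.map_sup, Subgroup.subgroupOf_map_subtype, Subgroup.inclusion_range,
      Subgroup.subgroupOf_map_subtype, ← MonoidHom.range_eq_map, Subgroup.range_subtype,
      inf_of_le_left hQR, inf_of_le_left hMR]
  have hsurj : Function.Surjective φ := by
    intro z
    obtain ⟨r, rfl⟩ := QuotientGroup.mk'_surjective N' z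
    have hr : r ∈ N' ⊔ (Subgroup.inclusion hMR).range := by rw [hcomap]; trivial
    have : (QuotientGroup.mk' N') r ∈ Subgroup.map (QuotientGroup.mk' N')
        (N' ⊔ (Subgroup.inclusion hMR).range) := ⟨r, hr, rfl⟩
    rw [Subgroup.map_sup] at this
    have hbot : Subgroup.map (QuotientGroup.mk' N') N' = ⊥ := by
      rw [eq_bot_iff]
      rintro _ ⟨n, hn, rfl⟩
      simpa [QuotientGroup.eq_one_iff] using hn
    rw [hbot, bot_sup_eq] at this
    obtain ⟨m, hm, hm'⟩ := this
    obtain ⟨m', rfl⟩ := hm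
    exact ⟨m', hm'⟩
  have hcard1 : Nat.card R = Nat.card (R ⧸ N') * Nat.card N' :=
    Subgroup.card_eq_card_quotient_mul_card_subgroup N'
  have hcard2 : Nat.card N' = Nat.card Q :=
    Nat.card_congr (Subgroup.subgroupOfEquivOfLe hQR).toEquiv
  have hcard3 : Nat.card (R ⧸ N') ≤ Nat.card M := Nat.card_le_card_of_surjective φ hsurj
  calc Nat.card R = Nat.card (R ⧸ N') * Nat.card N' := hcard1
    _ ≤ Nat.card M * Nat.card Q := by
        rw [hcard2]; exact Nat.mul_le_mul_right _ hcard3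
    _ = Nat.card Q * Nat.card M := Nat.mul_comm _ _

end Aux3

section Aux4

variable {G : Type*} [Group G]

/-- A self-normalizing `p`-subgroup of a finite group is a Sylow `p`-subgroup. -/
lemma eq_sylow_of_self_normalizing [Finite G] {p : ℕ} [Fact p.Prime] {M : Subgroup G}
    (hpg : IsPGroup p M) (hself : Subgroup.normalizer (M : Set G) = M) :
    ∃ P : Sylow p G, (P : Subgroup G) = M := by
  obtain ⟨P, hMP⟩ := hpg.exists_le_sylow
  refine ⟨P, le_antisymm ?_ hMP⟩
  by_contra hPM
  -- M.subgroupOf P is proper in P, so by the normalizer condition it grows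
  have hnil : Group.IsNilpotent (P : Subgroup G) := P.2.isNilpotent
  have hnc : NormalizerCondition (P : Subgroup G) := normalizerCondition_of_isNilpotent
  have hne : M.subgroupOf (P : Subgroup G) ≠ ⊤ := by
    rw [Ne, Subgroup.subgroupOf_eq_top]
    exact hPM
  have hlt := hnc _ (lt_top_iff_ne_top.mpr hne)
  obtain ⟨u, hu_mem, hu_not⟩ := SetLike.exists_of_lt hlt
  have hu_norm : (u : G) ∈ Subgroup.normalizer (M : Set G) := by
    rw [Subgroup.mem_normalizer_iff]
    intro h
    constructor
    · intro hh
      have hhP : h ∈ (P : Subgroup G) := hMP hh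
      have : (⟨h, hhP⟩ : (P : Subgroup G)) ∈ M.subgroupOf (P : Subgroup G) := hh
      have := (Subgroup.mem_normalizer_iff.mp hu_mem ⟨h, hhP⟩).mp this
      simpa [Subgroup.mem_subgroupOf] using this
    · intro hh
      have huP : (u : G) ∈ (P : Subgroup G) := u.2
      have hhP : h ∈ (P : Subgroup G) := by
        have h1 : (u : G) * h * (u : G)⁻¹ ∈ (P : Subgroup G) := hMP hh
        have h2 : (u : G)⁻¹ * ((u : G) * h * (u : G)⁻¹) * (u : G) ∈ (P : Subgroup G) :=
          mul_mem (mul_mem (inv_mem huP) h1) huP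
        simpa [mul_assoc] using h2
      have hconj : u * (⟨h, hhP⟩ : (P : Subgroup G)) * u⁻¹ ∈ M.subgroupOf (P : Subgroup G) := by
        simpa [Subgroup.mem_subgroupOf] using hh
      have := (Subgroup.mem_normalizer_iff.mp hu_mem ⟨h, hhP⟩).mpr hconj
      simpa [Subgroup.mem_subgroupOf] using this
  rw [hself] at hu_norm
  exact hu_not hu_norm

end Aux4

section Aux5

variable {G : Type*} [Group G]

/-- If a normal coatom has solvable quotient-side trivial structure, the group is solvable. -/
lemma solvable_of_coatom_normal [Finite G] {M : Subgroup G} (hmax : IsCoatom M)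
    [hN : M.Normal] [hs : Group.IsSolvable M] : IsSolvable G := by
  -- the quotient has no proper nontrivial subgroups, hence is cyclic, hence solvable
  haveI : Group.IsSolvable (G ⧸ M) := by
    rcases subsingleton_or_nontrivial (G ⧸ M) with h | h
    · exact isSolvable_of_comm fun a b => Subsingleton.elim _ _
    · obtain ⟨a, ha⟩ := exists_ne (1 : G ⧸ M)
      have hza : Subgroup.zpowers a = ⊤ := by
        set H : Subgroup G := (Subgroup.zpowers a).comap (QuotientGroup.mk' M) with hH
        have hMH : M ≤ H := by
          intro g hg
          have : (QuotientGroup.mk' M) g = 1 := (QuotientGroup.eq_one_iff g).mpr hg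
          rw [hH, Subgroup.mem_comap, this]
          exact one_mem _
        have hmap : Subgroup.map (QuotientGroup.mk' M) H = Subgroup.zpowers a :=
          Subgroup.map_comap_eq_self_of_surjective (QuotientGroup.mk'_surjective M) _
        rcases eq_or_lt_of_le hMH with heq | hlt
        · exfalso
          apply ha
          have hbot : Subgroup.zpowers a ≤ ⊥ := by
            rw [← hmap, ← heq]
            rintro _ ⟨m, hm, rfl⟩
            simpa [QuotientGroup.eq_one_iff] using hm
          rw [← Subgroup.zpowers_eq_bot]
          exact le_antisymm hbot bot_le
        · have htop : H = ⊤ := hmax.2 _ hlt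
          rw [← hmap, htop, ← MonoidHom.range_eq_map,
            MonoidHom.range_eq_top.mpr (QuotientGroup.mk'_surjective M)]
      haveI : IsCyclic (G ⧸ M) := ⟨⟨a, fun b => by
        have : b ∈ Subgroup.zpowers a := by rw [hza]; trivial
        exact this⟩⟩
      letI : CommGroup (G ⧸ M) := IsCyclic.commGroup
      exact isSolvable_of_comm fun a b => mul_comm a b
  exact solvable_of_ker_le_range M.subtype (QuotientGroup.mk' M)
    (by rw [QuotientGroup.ker_mk', Subgroup.range_subtype])

end Aux5

section Main

variable {G : Type*} [Group G]

/-- A finite group with a commutative `p`-subgroup as a coatom (maximal subgroup) is solvable. -/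
theorem solvable_of_pgroup_coatom [Finite G] {p : ℕ} [Fact p.Prime] {M : Subgroup G}
    (hmax : IsCoatom M) (hpg : IsPGroup p M) (hcomm : ∀ a b : M, a * b = b * a) :
    IsSolvable G := by
  haveI : Group.IsSolvable M := isSolvable_of_comm hcomm
  by_cases hN : Subgroup.normalizer (M : Set G) = M
  swap
  · -- M is normal
    have htop : Subgroup.normalizer (M : Set G) = ⊤ :=
      hmax.2 _ (lt_of_le_of_ne Subgroup.le_normalizer (Ne.symm hN))
    haveI : M.Normal := Subgroup.normalizer_eq_top_iff.mp htop
    exact solvable_of_coatom_normal hmax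
  -- M is self-normalizing, hence a Sylow p-subgroup
  obtain ⟨P, hPM⟩ := eq_sylow_of_self_normalizing hpg hN
  -- Burnside's normal p-complement theorem applies
  have hPcent : Subgroup.normalizer ((P : Subgroup G) : Set G) ≤ Subgroup.centralizer (P : Set G) := by
    rw [hPM, hN]
    intro g hg
    rw [Subgroup.mem_centralizer_iff]
    intro h hh
    have hhM : h ∈ M := by
      have : h ∈ (P : Subgroup G) := hh
      rwa [hPM] at this
    exact congrArg Subtype.val (hcomm ⟨h, hhM⟩ ⟨g, hg⟩)
  set K : Subgroup G := (MonoidHom.transferSylow P hPcent).ker with hK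
  have hcompl : Subgroup.IsComplement' K (P : Subgroup G) :=
    MonoidHom.ker_transferSylow_isComplement' P hPcent
  haveI : K.Normal := MonoidHom.normal_ker _
  -- the quotient G/K is a p-group
  have hcardP : ∃ n, Nat.card (P : Subgroup G) = p ^ n :=
    ⟨_, P.card_eq_multiplicity⟩
  obtain ⟨n, hn⟩ := hcardP
  have hindexK : K.index = Nat.card (P : Subgroup G) := hcompl.symm.index_eq_card
  have hGK : IsPGroup p (G ⧸ K) :=
    IsPGroup.of_card (by rw [← Subgroup.index_eq_card, hindexK, hn])
  haveI : Group.IsSolvable (G ⧸ K) := by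
    haveI := hGK.isNilpotent
    infer_instance
  -- main part: K is a q-group, hence solvable
  haveI : Group.IsSolvable K := by
    by_cases hKbot : K = ⊥
    · rw [hKbot]
      exact isSolvable_of_comm fun a b => Subsingleton.elim _ _
    obtain ⟨q, hq, hqdvd⟩ := Nat.exists_prime_and_dvd
      (fun h1 => hKbot (Subgroup.card_eq_one.mp h1))
    haveI : Fact q.Prime := ⟨hq⟩
    obtain ⟨Q⟩ : Nonempty (Sylow q K) := inferInstance
    set Q' : Subgroup G := (Q : Subgroup K).map K.subtype with hQ'
    have hQ'pg : IsPGroup q Q' := Q.2.map _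
    have hfrat : Subgroup.normalizer (Q' : Set G) ⊔ K = ⊤ := Sylow.normalizer_sup_eq_top Q
    set N : Subgroup G := Subgroup.normalizer (Q' : Set G) with hNdef
    -- N surjects onto G/K
    set π := QuotientGroup.mk' K with hπ
    have hmapK : Subgroup.map π K = ⊥ := by
      rw [eq_bot_iff]
      rintro _ ⟨k, hk, rfl⟩
      rw [Subgroup.mem_bot]
      exact (QuotientGroup.eq_one_iff k).mpr hk
    have hπN : Subgroup.map π N = ⊤ := by
      have : Subgroup.map π (N ⊔ K) = ⊤ := by
        rw [hfrat, ← MonoidHom.range_eq_map, MonoidHom.range_eq_top.mpr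
          (QuotientGroup.mk'_surjective K)]
      rwa [Subgroup.map_sup, hmapK, sup_bot_eq] at this
    -- a Sylow p-subgroup of N maps onto G/K
    have hρ : Function.Surjective (π.comp N.subtype) := by
      rw [← MonoidHom.range_eq_top, MonoidHom.range_comp, Subgroup.range_subtype]
      exact hπN
    obtain ⟨SN⟩ : Nonempty (Sylow p N) := inferInstance
    set T : Subgroup G := (SN : Subgroup N).map N.subtype with hT
    have hTpg : IsPGroup p T := SN.2.map _
    have hTN : T ≤ N := Subgroup.map_subtype_le _
    have hmapT : Subgroup.map π T = ⊤ := by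
      have h1 : Subgroup.map (π.comp N.subtype) (SN : Subgroup N) = Subgroup.map π T := by
        rw [hT, Subgroup.map_map]
      have h2 : (Subgroup.map (π.comp N.subtype) (SN : Subgroup N)).index ∣
          (SN : Subgroup N).index := Subgroup.index_map_dvd _ hρ
      have h3 : ¬ p ∣ (Subgroup.map (π.comp N.subtype) (SN : Subgroup N)).index :=
        fun hdvd => SN.not_dvd_index (hdvd.trans h2)
      have h4 : (Subgroup.map (π.comp N.subtype) (SN : Subgroup N)).index ∣ p ^ n := by
        have := Subgroup.index_dvd_card (Subgroup.map (π.comp N.subtype) (SN : Subgroup N))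
        rwa [← Subgroup.index_eq_card, hindexK, hn] at this
      have h5 : (Subgroup.map (π.comp N.subtype) (SN : Subgroup N)).index = 1 := by
        obtain ⟨j, hj, hjeq⟩ := (Nat.dvd_prime_pow Fact.out).mp h4
        rcases Nat.eq_zero_or_pos j with rfl | hj0
        · simpa using hjeq
        · exact absurd (hjeq ▸ dvd_pow_self p hj0.ne') h3
      exact Subgroup.index_eq_one.mp (h1 ▸ h5)
    -- K ∩ T = ⊥ and |T| = |G/K|, so T is a Sylow p-subgroup of G
    have hdisj : Disjoint K T := MonoidHom.ker_transferSylow_disjoint P hPcent T hTpg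
    have hbij : Function.Bijective (π.comp T.subtype) := by
      constructor
      · rw [← MonoidHom.ker_eq_bot_iff]
        rw [eq_bot_iff]
        intro t ht
        have h1 : (t : G) ∈ K := by
          have : π (t : G) = 1 := ht
          rwa [← MonoidHom.mem_ker, QuotientGroup.ker_mk'] at this
        have : (t : G) ∈ K ⊓ T := ⟨h1, t.2⟩
        rw [hdisj.eq_bot] at this
        rw [Subgroup.mem_bot] at this ⊢
        exact Subtype.ext this
      · rw [← MonoidHom.range_eq_top, MonoidHom.range_comp, Subgroup.range_subtype]
        exact hmapT
    have hcardT : Nat.card T = Nat.card (P : Subgroup G) := by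
      rw [Nat.card_congr (Equiv.ofBijective _ hbij), ← Subgroup.index_eq_card, hindexK]
    -- conjugate M into the normalizer of a conjugate of Q'
    have hTindex : T.index = (P : Subgroup G).index := by
      have h1 : Nat.card T * T.index = Nat.card G := Subgroup.card_mul_index T
      have h2 : Nat.card (P : Subgroup G) * (P : Subgroup G).index = Nat.card G :=
        Subgroup.card_mul_index _
      rw [hcardT] at h1
      exact Nat.eq_of_mul_eq_mul_left (Nat.card_pos) (h1.trans h2.symm)
    set hTsyl : Sylow p G := hTpg.toSylow (by rw [hTindex]; exact P.not_dvd_index)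
      with hTsyl_def
    have hTsyl_coe : (hTsyl : Subgroup G) = T := IsPGroup.toSylow_coe _ _
    obtain ⟨g, hg⟩ := MulAction.exists_smul_eq G hTsyl P
    set Q₂ : Subgroup G := Q'.map (MulAut.conj g).toMonoidHom with hQ₂
    have hMQ₂ : M ≤ Subgroup.normalizer (Q₂ : Set G) := by
      have h1 : (P : Subgroup G) = Subgroup.map (MulAut.conj g).toMonoidHom T := by
        rw [← hTsyl_coe, ← hg]
        rfl
      have h2 : Subgroup.map (MulAut.conj g).toMonoidHom T ≤
          Subgroup.map (MulAut.conj g).toMonoidHom N :=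
        Subgroup.map_mono hTN
      have h3 : Subgroup.map (MulAut.conj g).toMonoidHom N ≤ Subgroup.normalizer (Q₂ : Set G) :=
        Subgroup.le_normalizer_map _
      rw [← hPM, h1]
      exact le_trans h2 h3
    have hQ₂K : Q₂ ≤ K := by
      have h1 : Q' ≤ K := Subgroup.map_subtype_le _
      have h2 : Subgroup.map (MulAut.conj g).toMonoidHom K = K := by
        have := Subgroup.Normal.conj_smul_eq_self g K
        rwa [Subgroup.pointwise_smul_def] at this
      rw [hQ₂, ← h2]
      exact Subgroup.map_mono h1
    have hQ₂pg : IsPGroup q Q₂ := hQ'pg.map _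
    have hQ₂bot : Q₂ ≠ ⊥ := by
      intro hbot
      have hcard : Nat.card Q' = Nat.card Q₂ :=
        Nat.card_congr (Subgroup.equivMapOfInjective Q' _ (MulAut.conj g).injective).toEquiv
      have hcardQ : Nat.card (Q : Subgroup K) = Nat.card Q' :=
        Nat.card_congr (Subgroup.equivMapOfInjective _ _ K.subtype_injective).toEquiv
      have hqQ : q ∣ Nat.card (Q : Subgroup K) := by
        rw [Q.card_eq_multiplicity]
        exact dvd_pow_self q (Nat.Prime.factorization_pos_of_dvd hq
          Nat.card_pos.ne' hqdvd).ne'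
      rw [hcardQ, hcard, hbot, Subgroup.card_bot] at hqQ
      exact hq.one_lt.ne' (Nat.dvd_one.mp hqQ)
    -- maximality forces Q₂ ⊔ M = ⊤, and the counting argument gives Q₂ = K
    have hQ₂M : Q₂ ⊔ M = ⊤ := by
      apply hmax.2
      rcases lt_or_eq_of_le (le_sup_right : M ≤ Q₂ ⊔ M) with h | h
      · exact h
      · exfalso
        have hle : Q₂ ≤ M := le_trans le_sup_left h.symm.le
        have : Q₂ ≤ K ⊓ M := le_inf hQ₂K hle
        rw [← hPM] at this
        rw [hcompl.disjoint.eq_bot] at this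
        exact hQ₂bot (le_antisymm this bot_le)
    have hcard_bound : Nat.card G ≤ Nat.card Q₂ * Nat.card M := by
      have := card_sup_le_of_le_normalizer hMQ₂
      rwa [hQ₂M, Nat.card_congr Subgroup.topEquiv.toEquiv] at this
    have hKM : Nat.card K * Nat.card M = Nat.card G := by
      have := hcompl.card_mul
      rwa [hPM] at this
    have hle : Nat.card K ≤ Nat.card Q₂ := by
      have hMpos : 0 < Nat.card M := Nat.card_pos
      have : Nat.card K * Nat.card M ≤ Nat.card Q₂ * Nat.card M := by
        rw [hKM]; exact hcard_bound
      exact Nat.le_of_mul_le_mul_right this hMpos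
    have hQK : Q₂ = K := Subgroup.eq_of_le_of_card_ge hQ₂K hle
    have hKq : IsPGroup q K := hQK ▸ hQ₂pg
    haveI := hKq.isNilpotent
    infer_instance
  exact solvable_of_ker_le_range K.subtype (QuotientGroup.mk' K)
    (by rw [QuotientGroup.ker_mk', Subgroup.range_subtype])

end Main

section Aux6

variable {G : Type*} [Group G]

/-- If every `p`-subgroup of `G` has order dividing `p`, `orderOf x = p`, and `⟨x,y⟩` is
nilpotent, then `x` and `y` commute. -/
lemma commute_of_mem_nilpotentizer_of_small_sylow [Finite G] {p : ℕ} [Fact p.Prime] {x y : G}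
    (hx : orderOf x = p) (hdvd_all : ∀ Q : Subgroup G, IsPGroup p Q → Nat.card Q ∣ p)
    (hy : y ∈ nilpotentizer x) : x * y = y * x := by
  classical
  set H : Subgroup G := Subgroup.closure ({x, y} : Set G) with hH
  haveI hnilH : Group.IsNilpotent H := hy
  have hxH : x ∈ H := Subgroup.subset_closure (Set.mem_insert _ _)
  have hyH : y ∈ H := Subgroup.subset_closure (Set.mem_insert_of_mem _ rfl)
  set x' : H := ⟨x, hxH⟩ with hx'
  set y' : H := ⟨y, hyH⟩ with hy'
  have horder_mem : ∀ (K : Subgroup H) (g : H), g ∈ K → orderOf g ∣ Nat.card K := by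
    intro K g hg
    have h := orderOf_dvd_natCard (⟨g, hg⟩ : K)
    rw [← orderOf_injective K.subtype Subtype.coe_injective ⟨g, hg⟩] at h
    exact h
  have hordx' : orderOf x' = p := by
    rw [← hx]
    exact (orderOf_injective H.subtype Subtype.coe_injective x').symm
  have hcardH_ne : Nat.card H ≠ 0 := Nat.card_pos.ne'
  have hpH : p ∣ Nat.card H := hordx' ▸ orderOf_dvd_natCard x'
  -- every Sylow p-subgroup of H has cardinality exactly p
  have hsyl_card : ∀ S : Sylow p H, Nat.card (S : Subgroup H) = p := by
    intro S
    have h1 : Nat.card (S : Subgroup H) = p ^ (Nat.card H).factorization p :=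
      S.card_eq_multiplicity
    have h2 : IsPGroup p ((S : Subgroup H).map H.subtype) := S.2.map _
    have h3 : Nat.card ((S : Subgroup H).map H.subtype) ∣ p := hdvd_all _ h2
    have h4 : Nat.card ((S : Subgroup H).map H.subtype) = Nat.card (S : Subgroup H) :=
      (Nat.card_congr (Subgroup.equivMapOfInjective _ _ H.subtype_injective).toEquiv).symm
    have h5 : (Nat.card H).factorization p ≤ 1 := by
      by_contra hgt
      push_neg at hgt
      have : p ^ 2 ∣ p := by
        calc p ^ 2 ∣ p ^ (Nat.card H).factorization p := pow_dvd_pow p hgt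
          _ = Nat.card (S : Subgroup H) := h1.symm
          _ ∣ p := h4 ▸ h3
      have hple := Nat.le_of_dvd (Nat.Prime.pos Fact.out) this
      rw [pow_two] at hple
      have h2 : 2 ≤ p := (Fact.out : p.Prime).two_le
      nlinarith
    have h6 : 1 ≤ (Nat.card H).factorization p :=
      Nat.Prime.factorization_pos_of_dvd Fact.out hcardH_ne hpH
    rw [h1, le_antisymm h5 h6, pow_one]
  -- the Sylow p-subgroup of H is ⟨x'⟩ and is normal
  have hzp : IsPGroup p (Subgroup.zpowers x') :=
    IsPGroup.of_card (by rw [Nat.card_zpowers, hordx']; exact (pow_one p).symm)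
  obtain ⟨S1, hxS1⟩ := hzp.exists_le_sylow
  have hS1 : (S1 : Subgroup H) = Subgroup.zpowers x' := by
    refine (Subgroup.eq_of_le_of_card_ge hxS1 ?_).symm
    rw [hsyl_card S1, Nat.card_zpowers, hordx']
  have hnormal : ∀ (q : ℕ) (_ : Fact q.Prime) (Sq : Sylow q H), (Sq : Subgroup H).Normal :=
    ((isNilpotent_of_finite_tfae (G := H)).out 0 3).mp hnilH
  -- every Sylow subgroup of H centralizes x'
  set CC : Subgroup H := Subgroup.centralizer {x'} with hCC
  have hsylCC : ∀ (q : ℕ) (hq : Fact q.Prime) (Sq : Sylow q H), (Sq : Subgroup H) ≤ CC := by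
    intro q hq Sq
    by_cases hqp : q = p
    · subst hqp
      haveI : S1.Normal := hnormal q hq S1
      obtain ⟨g, hg⟩ := MulAction.exists_smul_eq H S1 Sq
      rw [Sylow.smul_eq_of_normal] at hg
      rw [← hg, hS1]
      intro z hz
      rw [Subgroup.mem_centralizer_iff]
      rintro h (rfl : h = x')
      obtain ⟨k, rfl⟩ := Subgroup.mem_zpowers_iff.mp hz
      exact ((Commute.refl x').zpow_right k).eq
    · haveI : (S1 : Subgroup H).Normal := hnormal p ‹_› S1
      haveI : (Sq : Subgroup H).Normal := hnormal q hq Sq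
      have hdisj : Disjoint (S1 : Subgroup H) (Sq : Subgroup H) := by
        rw [disjoint_iff, eq_bot_iff]
        rintro g ⟨hg1, hgq⟩
        have h1 : orderOf g ∣ p := by
          rw [← hsyl_card S1]
          exact horder_mem _ g hg1
        have h2 : orderOf g ∣ Nat.card (Sq : Subgroup H) := horder_mem _ g hgq
        have h3 : ∃ s, Nat.card (Sq : Subgroup H) = q ^ s := ⟨_, Sq.card_eq_multiplicity⟩
        obtain ⟨s, hs⟩ := h3
        have hcop : Nat.Coprime p (q ^ s) :=
          (Nat.coprime_primes Fact.out Fact.out |>.mpr fun h => hqp h.symm).pow_right s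
        have hgcd : orderOf g ∣ Nat.gcd p (q ^ s) := Nat.dvd_gcd h1 (hs ▸ h2)
        rw [Nat.Coprime] at hcop
        rw [hcop] at hgcd
        rw [Subgroup.mem_bot, ← orderOf_eq_one_iff]
        exact Nat.dvd_one.mp hgcd
      intro z hz
      rw [Subgroup.mem_centralizer_iff]
      rintro h (rfl : h = x')
      have hx'S1 : x' ∈ (S1 : Subgroup H) := by
        rw [hS1]
        exact Subgroup.mem_zpowers x'
      exact (Subgroup.commute_of_normal_of_disjoint _ _ ‹_› ‹_› hdisj x' z hx'S1 hz).eq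
  -- CC contains a full set of Sylow subgroups, so CC = ⊤
  have hCCcard : Nat.card H ∣ Nat.card CC := by
    rw [← Nat.factorization_le_iff_dvd hcardH_ne Nat.card_pos.ne']
    rw [Finsupp.le_def]
    intro q
    by_cases hq : q.Prime
    · haveI : Fact q.Prime := ⟨hq⟩
      obtain ⟨Sq⟩ : Nonempty (Sylow q H) := inferInstance
      have h1 : q ^ (Nat.card H).factorization q ∣ Nat.card CC := by
        rw [← Sq.card_eq_multiplicity]
        exact Subgroup.card_dvd_of_le (hsylCC q ‹_› Sq)
      exact (Nat.Prime.pow_dvd_iff_le_factorization hq Nat.card_pos.ne').mp h1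
    · rw [Nat.factorization_eq_zero_of_not_prime _ hq]
      exact Nat.zero_le _
  have hCCtop : CC = ⊤ := by
    apply Subgroup.eq_top_of_card_eq
    exact le_antisymm (Subgroup.card_le_card_group CC) (Nat.le_of_dvd Nat.card_pos hCCcard)
  have hy'CC : y' ∈ CC := hCCtop ▸ Subgroup.mem_top y'
  have h := Subgroup.mem_centralizer_iff.mp hy'CC x' rfl
  have h2 : ((x' * y' : H) : G) = ((y' * x' : H) : G) := congrArg Subtype.val h
  simpa using h2

end Aux6

section Final

variable {G : Type*} [Group G]

lemma nilpotentizer_card_ne_pow [Finite G] (hG : ¬ IsSolvable G) (x : G)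
    (hmax : IsCoatom (Subgroup.closure (nilpotentizer x))) {p : ℕ} [Fact p.Prime] {k : ℕ}
    (hk : k = 1 ∨ k = 2) : Nat.card (nilpotentizer x) ≠ p ^ k := by
  classical
  intro hcard
  have hp : p.Prime := Fact.out
  -- x ≠ 1
  have hx1 : x ≠ 1 := by
    rintro rfl
    apply hmax.1
    have huniv : nilpotentizer (1 : G) = Set.univ := by
      ext y
      simp only [Set.mem_univ, iff_true]
      exact nil_closure_pair_of_commute (by rw [one_mul, mul_one])
    rw [huniv, Subgroup.closure_univ]
  -- the order of x is a nontrivial power of p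
  have hord : orderOf x ∣ p ^ k := by
    rw [← hcard]
    exact orderOf_dvd_card_nilpotentizer x
  obtain ⟨i, hik, hxi⟩ := (Nat.dvd_prime_pow hp).mp hord
  have hi0 : 0 < i := by
    rcases Nat.eq_zero_or_pos i with rfl | h
    · exact absurd (orderOf_eq_one_iff.mp (by rw [hxi, pow_zero])) hx1
    · exact h
  -- a Sylow p-subgroup containing x lies inside the nilpotentizer
  have hzp_pg : IsPGroup p (Subgroup.zpowers x) :=
    IsPGroup.of_card (by rw [Nat.card_zpowers, hxi])
  obtain ⟨P, hxP⟩ := hzp_pg.exists_le_sylow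
  have hPsub : ((P : Subgroup G) : Set G) ⊆ nilpotentizer x :=
    pgroup_subset_nilpotentizer P.2 (hxP (Subgroup.mem_zpowers x))
  have hcard_le : Nat.card (P : Subgroup G) ≤ p ^ k := by
    calc Nat.card (P : Subgroup G) = ((P : Subgroup G) : Set G).ncard :=
          Nat.card_coe_set_eq _
      _ ≤ (nilpotentizer x).ncard := Set.ncard_le_ncard hPsub (Set.toFinite _)
      _ = Nat.card (nilpotentizer x) := (Nat.card_coe_set_eq _).symm
      _ = p ^ k := hcard
  set m : ℕ := (Nat.card G).factorization p with hm
  have hPm : Nat.card (P : Subgroup G) = p ^ m := P.card_eq_multiplicity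
  have hdvdP : p ^ i ∣ Nat.card (P : Subgroup G) := by
    rw [← hxi, ← Nat.card_zpowers]
    exact Subgroup.card_dvd_of_le hxP
  have him : i ≤ m := (Nat.pow_dvd_pow_iff_le_right hp.one_lt).mp (hPm ▸ hdvdP)
  have hmk : m ≤ k := (Nat.pow_le_pow_iff_right hp.one_lt).mp (hPm ▸ hcard_le)
  by_cases heq : Nat.card (P : Subgroup G) = p ^ k
  · -- the nilpotentizer is exactly the Sylow subgroup, which is abelian
    have hset : ((P : Subgroup G) : Set G) = nilpotentizer x := by
      apply Set.eq_of_subset_of_ncard_le hPsub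
      have e1 : (nilpotentizer x).ncard = p ^ k := by
        rw [← Nat.card_coe_set_eq]; exact hcard
      have e2 : ((P : Subgroup G) : Set G).ncard = p ^ k := by
        rw [← Nat.card_coe_set_eq]; exact heq
      rw [e1, e2]
    rw [← hset, Subgroup.closure_eq] at hmax
    have hcommP : ∀ a b : (P : Subgroup G), a * b = b * a := by
      rcases hk with rfl | rfl
      · rw [pow_one] at heq
        haveI : IsCyclic (P : Subgroup G) := isCyclic_of_prime_card heq
        letI : CommGroup (P : Subgroup G) := IsCyclic.commGroup
        exact fun a b => mul_comm a b
      · exact IsPGroup.commutative_of_card_eq_prime_sq heq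
    exact hG (solvable_of_pgroup_coatom hmax P.2 hcommP)
  · -- Sylow subgroups have order p, so the nilpotentizer is the centralizer of x
    have hmlt : m < k := lt_of_le_of_ne hmk (fun h => heq (by rw [hPm, h]))
    have hk2 : k = 2 := by
      rcases hk with rfl | rfl
      · omega
      · rfl
    have hm1 : m = 1 := by omega
    have hi1 : i = 1 := by omega
    have hordx : orderOf x = p := by rw [hxi, hi1, pow_one]
    -- every p-subgroup has order dividing p
    have hdvd_all : ∀ Q : Subgroup G, IsPGroup p Q → Nat.card Q ∣ p := by
      intro Q hQ
      obtain ⟨P', hQP'⟩ := hQ.exists_le_sylow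
      have h1 : Nat.card Q ∣ Nat.card (P' : Subgroup G) := Subgroup.card_dvd_of_le hQP'
      rwa [P'.card_eq_multiplicity, ← hm, hm1, pow_one] at h1
    have hcomm_all : ∀ y ∈ nilpotentizer x, x * y = y * x := fun y hy =>
      commute_of_mem_nilpotentizer_of_small_sylow hordx hdvd_all hy
    set C : Subgroup G := Subgroup.centralizer ({x} : Set G) with hC
    have hCsub : (C : Set G) ⊆ nilpotentizer x := by
      intro y hy
      exact nil_closure_pair_of_commute (Subgroup.mem_centralizer_iff.mp hy x rfl)
    have hsubC : nilpotentizer x ⊆ (C : Set G) := by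
      intro y hy
      rw [SetLike.mem_coe, Subgroup.mem_centralizer_iff]
      rintro h (rfl : h = x)
      exact hcomm_all y hy
    have hCeq : (C : Set G) = nilpotentizer x := Set.Subset.antisymm hCsub hsubC
    have hcardC : Nat.card C = p ^ 2 := by
      have e2 : Nat.card C = (C : Set G).ncard := Nat.card_coe_set_eq _
      rw [e2, hCeq, ← Nat.card_coe_set_eq, ← hk2]
      exact hcard
    have hCpg : IsPGroup p C := IsPGroup.of_card hcardC
    have := hdvd_all C hCpg
    rw [hcardC] at this
    have hle := Nat.le_of_dvd hp.pos this
    rw [pow_two] at hle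
    nlinarith [hp.two_le]

end Final

theorem stmt_10 {G : Type*} [Group G] [Finite G] (hG : ¬ IsSolvable G) (x : G)
    (hmax : IsCoatom (Subgroup.closure (nilpotentizer x))) :
    ∀ p : ℕ, p.Prime → Nat.card (nilpotentizer x) ≠ p ∧ Nat.card (nilpotentizer x) ≠ p ^ 2 := by
  intro p hp
  haveI : Fact p.Prime := ⟨hp⟩
  constructor
  · have := nilpotentizer_card_ne_pow hG x hmax (p := p) (k := 1) (Or.inl rfl)
    rwa [pow_one] at this
  · exact nilpotentizer_card_ne_pow hG x hmax (p := p) (k := 2) (Or.inr rfl)
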